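/- (Lemma 4.2, case (5,15).) For all nonnegative integers r and s, there exists a solution to HWP*(15; 5^r, 15^s) if and only if r + s = 14. -/
import Mathlib

set_option maxHeartbeats 1000000
set_option maxRecDepth 100000

def mkPerm (a b : Fin 15 → Fin 15) (h1 : ∀ x, b (a x) = x) (h2 : ∀ x, a (b x) = x) :
    Equiv.Perm (Fin 15) := ⟨a, b, h1, h2⟩


/-- A solution to the directed Hamilton–Waterloo problem HWP*(v; m^r, n^s):
a family of `r + s` permutations of `Fin v`, the first `r` of which are
fixed-point-free with all cycles of length `m` (i.e. every point has minimal
period `m`), the last `s` fixed-point-free with all cycles of length `n`,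
such that for every ordered pair of distinct vertices `(x, y)` there is exactly
one index `i` with `σ i x = y`. -/
def HWPStarSolution (v m n r s : ℕ) : Prop :=
  ∃ σ : Fin (r + s) → Equiv.Perm (Fin v),
    (∀ i : Fin (r + s), (i : ℕ) < r → ∀ x : Fin v, Function.minimalPeriod ⇑(σ i) x = m) ∧
    (∀ i : Fin (r + s), r ≤ (i : ℕ) → ∀ x : Fin v, Function.minimalPeriod ⇑(σ i) x = n) ∧
    (∀ x y : Fin v, x ≠ y → ∃! i : Fin (r + s), σ i x = y)

lemma per5 (f : Equiv.Perm (Fin 15)) (h5 : ∀ x, (⇑f)^[5] x = x) (h1 : ∀ x, f x ≠ x)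
    (x : Fin 15) : Function.minimalPeriod ⇑f x = 5 := by
  have hd : Function.minimalPeriod ⇑f x ∣ 5 :=
    Function.IsPeriodicPt.minimalPeriod_dvd (h5 x)
  rcases (Nat.dvd_prime (by norm_num)).mp hd with h | h
  · exfalso
    exact h1 x ((Function.minimalPeriod_eq_one_iff_isFixedPt).mp h)
  · exact h

lemma per15 (f : Equiv.Perm (Fin 15)) (h15 : ∀ x, (⇑f)^[15] x = x)
    (h3 : ∀ x, (⇑f)^[3] x ≠ x) (h5 : ∀ x, (⇑f)^[5] x ≠ x)
    (x : Fin 15) : Function.minimalPeriod ⇑f x = 15 := by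
  have hd : Function.minimalPeriod ⇑f x ∣ 15 :=
    Function.IsPeriodicPt.minimalPeriod_dvd (h15 x)
  have hn3 : ¬ Function.minimalPeriod ⇑f x ∣ 3 := by
    intro h
    exact h3 x (Function.isPeriodicPt_iff_minimalPeriod_dvd.mpr h)
  have hn5 : ¬ Function.minimalPeriod ⇑f x ∣ 5 := by
    intro h
    exact h5 x (Function.isPeriodicPt_iff_minimalPeriod_dvd.mpr h)
  have hle : Function.minimalPeriod ⇑f x ≤ 15 := Nat.le_of_dvd (by norm_num) hd
  interval_cases h : Function.minimalPeriod ⇑f x <;> simp_all <;> omega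

lemma uniq_of {n : ℕ} (σ : Fin n → Equiv.Perm (Fin 15))
    (h : ∀ x y : Fin 15, x ≠ y → ∃ i, σ i x = y ∧ ∀ j, σ j x = y → j = i) :
    ∀ x y : Fin 15, x ≠ y → ∃! i, σ i x = y := h

lemma case0 : HWPStarSolution 15 5 15 0 14 := by
  refine ⟨![mkPerm ![2,13,4,8,1,11,3,9,14,6,0,12,7,5,10] ![10,4,0,6,2,13,9,12,3,7,14,5,11,1,8] (by decide) (by decide),
    mkPerm ![14,9,5,7,3,0,4,8,13,10,12,6,11,2,1] ![5,14,13,4,6,2,11,3,7,1,9,12,10,8,0] (by decide) (by decide),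
    mkPerm ![11,10,1,6,9,4,8,3,0,14,5,2,13,7,12] ![8,2,11,7,5,10,3,13,6,4,1,0,14,12,9] (by decide) (by decide),
    mkPerm ![10,2,0,4,6,7,13,14,5,1,11,3,8,12,9] ![2,9,1,11,3,8,4,5,12,14,0,10,13,6,7] (by decide) (by decide),
    mkPerm ![7,14,9,5,0,12,2,13,6,3,8,10,4,1,11] ![4,13,6,9,12,3,8,0,10,2,11,14,5,7,1] (by decide) (by decide),
    mkPerm ![5,6,13,0,12,8,14,1,10,4,9,7,2,11,3] ![3,7,12,14,9,0,1,11,5,10,8,13,4,2,6] (by decide) (by decide),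
    mkPerm ![1,5,3,13,14,10,9,12,2,11,7,8,6,4,0] ![14,0,8,2,13,1,12,10,11,6,5,9,7,3,4] (by decide) (by decide),
    mkPerm ![12,7,8,11,5,13,0,6,1,2,14,9,10,3,4] ![6,8,9,13,14,4,7,1,2,11,12,3,0,5,10] (by decide) (by decide),
    mkPerm ![6,4,10,14,7,9,5,11,12,8,1,13,3,0,2] ![13,10,14,12,1,6,0,4,9,5,2,7,8,11,3] (by decide) (by decide),
    mkPerm ![9,0,11,2,10,6,7,4,3,12,13,1,5,14,8] ![1,11,3,8,7,12,5,6,14,0,4,2,9,10,13] (by decide) (by decide),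
    mkPerm ![8,3,6,12,13,2,1,10,11,0,4,5,14,9,7] ![9,6,5,1,10,11,2,14,0,13,7,8,3,4,12] (by decide) (by decide),
    mkPerm ![13,11,12,1,2,14,10,5,4,7,3,0,9,8,6] ![11,3,4,10,8,7,14,9,13,12,6,1,2,0,5] (by decide) (by decide),
    mkPerm ![3,12,14,9,8,1,11,2,7,13,6,4,0,10,5] ![12,5,7,0,11,14,10,8,4,3,13,6,1,9,2] (by decide) (by decide),
    mkPerm ![4,8,7,10,11,3,12,0,9,5,2,14,1,6,13] ![7,12,10,5,0,9,13,2,1,8,3,4,6,14,11] (by decide) (by decide)], ?_, ?_, ?_⟩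
  · intro i hi x
    fin_cases i <;>
      first
        | exact per5 _ (by decide) (by decide) x
        | exact absurd hi (by decide)
  · intro i hi x
    fin_cases i <;>
      first
        | exact per15 _ (by decide) (by decide) (by decide) x
        | exact absurd hi (by decide)
  · exact uniq_of _ (by decide)

lemma case1 : HWPStarSolution 15 5 15 1 13 := by
  refine ⟨![mkPerm ![2,13,4,6,1,3,11,9,14,8,7,12,5,0,10] ![13,4,0,5,2,12,3,10,9,7,14,6,11,1,8] (by decide) (by decide),
    mkPerm ![9,10,5,0,2,13,3,6,11,12,8,4,14,7,1] ![3,14,4,6,11,2,7,13,10,0,1,8,9,5,12] (by decide) (by decide),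
    mkPerm ![8,9,14,11,6,12,1,5,7,10,0,2,13,3,4] ![10,6,11,13,14,7,4,8,0,1,9,3,5,12,2] (by decide) (by decide),
    mkPerm ![5,0,6,10,8,11,13,12,1,2,4,7,9,14,3] ![1,8,9,14,10,0,2,11,4,12,3,5,7,6,13] (by decide) (by decide),
    mkPerm ![12,2,10,5,13,0,7,11,9,1,14,3,4,8,6] ![5,9,1,11,12,3,14,6,13,8,2,7,0,4,10] (by decide) (by decide),
    mkPerm ![6,3,12,14,7,9,8,13,10,4,11,5,0,1,2] ![12,13,14,1,9,11,0,4,6,5,8,10,2,7,3] (by decide) (by decide),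
    mkPerm ![10,6,8,7,0,2,4,1,3,14,12,9,11,5,13] ![4,7,5,8,6,13,1,3,2,11,0,12,10,14,9] (by decide) (by decide),
    mkPerm ![13,12,7,8,9,14,10,4,6,3,5,1,2,11,0] ![14,11,12,9,7,10,8,2,3,4,6,13,1,0,5] (by decide) (by decide),
    mkPerm ![11,4,0,13,3,7,12,14,5,6,1,8,10,2,9] ![2,10,13,4,1,8,9,5,11,14,12,0,6,3,7] (by decide) (by decide),
    mkPerm ![1,11,13,9,10,8,0,3,4,5,2,14,6,12,7] ![6,0,10,7,8,9,12,14,5,3,4,1,13,2,11] (by decide) (by decide),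
    mkPerm ![7,5,11,4,14,6,9,2,12,0,3,13,1,10,8] ![9,12,7,10,3,1,5,0,14,6,13,2,8,11,4] (by decide) (by decide),
    mkPerm ![4,14,3,1,5,10,2,8,0,11,13,6,7,9,12] ![8,3,6,2,0,4,11,12,7,13,5,9,14,10,1] (by decide) (by decide),
    mkPerm ![14,8,9,2,12,1,5,0,13,7,6,10,3,4,11] ![7,5,3,12,13,6,10,9,1,2,11,14,4,8,0] (by decide) (by decide),
    mkPerm ![3,7,1,12,11,4,14,10,2,13,9,0,8,6,5] ![11,2,8,0,5,14,13,1,12,10,7,4,3,9,6] (by decide) (by decide)], ?_, ?_, ?_⟩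
  · intro i hi x
    fin_cases i <;>
      first
        | exact per5 _ (by decide) (by decide) x
        | exact absurd hi (by decide)
  · intro i hi x
    fin_cases i <;>
      first
        | exact per15 _ (by decide) (by decide) (by decide) x
        | exact absurd hi (by decide)
  · exact uniq_of _ (by decide)

lemma case2 : HWPStarSolution 15 5 15 2 12 := by
  refine ⟨![mkPerm ![2,13,4,6,1,3,11,9,14,8,7,12,5,0,10] ![13,4,0,5,2,12,3,10,9,7,14,6,11,1,8] (by decide) (by decide),
    mkPerm ![9,0,10,5,2,6,7,13,11,12,8,4,14,3,1] ![1,14,4,13,11,3,5,6,10,0,2,8,9,7,12] (by decide) (by decide),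
    mkPerm ![11,8,1,0,3,14,12,10,5,6,4,2,13,7,9] ![3,2,11,4,10,8,9,13,1,14,7,0,6,12,5] (by decide) (by decide),
    mkPerm ![3,9,12,14,7,8,10,11,1,0,13,5,6,4,2] ![9,8,14,0,13,11,12,4,5,1,6,7,2,10,3] (by decide) (by decide),
    mkPerm ![8,6,14,7,5,11,4,0,13,1,9,3,10,2,12] ![7,9,13,11,6,4,1,3,0,10,12,5,14,8,2] (by decide) (by decide),
    mkPerm ![6,14,0,2,13,10,5,1,9,4,11,8,7,12,3] ![2,7,3,14,9,6,0,12,11,8,5,10,13,4,1] (by decide) (by decide),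
    mkPerm ![1,5,13,4,10,9,8,2,12,11,0,14,3,6,7] ![10,0,7,12,3,1,13,14,6,5,4,9,8,2,11] (by decide) (by decide),
    mkPerm ![14,7,8,11,0,12,3,5,6,10,2,1,4,9,13] ![4,11,10,6,12,7,8,1,2,13,9,3,5,14,0] (by decide) (by decide),
    mkPerm ![7,3,9,12,11,4,1,14,2,5,6,13,0,10,8] ![12,6,8,1,5,9,10,0,14,2,13,4,3,11,7] (by decide) (by decide),
    mkPerm ![10,4,11,13,8,7,14,3,0,2,12,6,9,1,5] ![8,13,9,7,1,14,11,5,4,12,0,2,10,3,6] (by decide) (by decide),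
    mkPerm ![5,2,3,9,12,1,0,6,10,13,14,7,11,8,4] ![6,5,1,2,14,0,7,11,13,3,8,12,4,9,10] (by decide) (by decide),
    mkPerm ![12,10,5,8,6,13,2,4,7,14,3,9,1,11,0] ![14,12,6,10,7,2,4,8,3,11,1,13,0,5,9] (by decide) (by decide),
    mkPerm ![13,11,7,10,14,2,9,12,4,3,1,0,8,5,6] ![11,10,5,9,8,13,14,2,12,6,3,1,7,0,4] (by decide) (by decide),
    mkPerm ![4,12,6,1,9,0,13,8,3,7,5,10,2,14,11] ![5,3,12,8,0,10,2,9,7,4,11,14,1,6,13] (by decide) (by decide)], ?_, ?_, ?_⟩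
  · intro i hi x
    fin_cases i <;>
      first
        | exact per5 _ (by decide) (by decide) x
        | exact absurd hi (by decide)
  · intro i hi x
    fin_cases i <;>
      first
        | exact per15 _ (by decide) (by decide) (by decide) x
        | exact absurd hi (by decide)
  · exact uniq_of _ (by decide)

lemma case3 : HWPStarSolution 15 5 15 3 11 := by
  refine ⟨![mkPerm ![2,13,4,6,1,3,11,9,14,8,7,12,5,0,10] ![13,4,0,5,2,12,3,10,9,7,14,6,11,1,8] (by decide) (by decide),
    mkPerm ![9,0,10,5,2,6,7,13,11,12,8,4,14,3,1] ![1,14,4,13,11,3,5,6,10,0,2,8,9,7,12] (by decide) (by decide),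
    mkPerm ![11,8,1,13,5,10,3,4,0,6,12,2,7,14,9] ![8,2,11,6,7,4,9,12,1,14,5,0,10,3,13] (by decide) (by decide),
    mkPerm ![3,7,12,1,0,8,5,14,13,4,11,9,6,10,2] ![4,3,14,0,9,6,12,1,5,11,13,10,2,8,7] (by decide) (by decide),
    mkPerm ![12,9,0,7,10,2,14,1,3,11,13,6,4,8,5] ![2,7,5,8,12,14,11,3,13,1,4,9,0,10,6] (by decide) (by decide),
    mkPerm ![13,5,3,10,9,12,2,11,7,0,4,14,8,1,6] ![9,13,6,2,10,1,14,8,12,4,3,7,5,0,11] (by decide) (by decide),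
    mkPerm ![4,2,5,8,7,14,0,12,6,1,9,3,10,11,13] ![6,9,1,11,0,2,8,4,3,10,12,13,7,14,5] (by decide) (by decide),
    mkPerm ![7,14,11,12,3,13,10,6,9,2,5,0,1,4,8] ![11,12,9,4,13,10,7,0,14,8,6,2,3,5,1] (by decide) (by decide),
    mkPerm ![5,12,8,4,14,9,13,3,1,7,6,10,0,2,11] ![12,8,13,7,3,0,10,9,2,5,11,14,1,6,4] (by decide) (by decide),
    mkPerm ![6,10,7,9,11,4,1,0,12,13,14,8,2,5,3] ![7,6,12,14,5,13,0,2,11,3,1,4,8,9,10] (by decide) (by decide),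
    mkPerm ![14,11,6,2,8,1,4,10,5,3,0,13,9,7,12] ![10,5,3,9,6,8,2,13,4,12,7,1,14,11,0] (by decide) (by decide),
    mkPerm ![8,3,14,0,12,11,9,5,4,10,2,1,13,6,7] ![3,11,10,1,8,7,13,14,0,6,9,5,4,12,2] (by decide) (by decide),
    mkPerm ![1,6,9,14,13,0,8,2,10,5,3,7,11,12,4] ![5,0,7,10,14,9,1,11,6,2,8,12,13,4,3] (by decide) (by decide),
    mkPerm ![10,4,13,11,6,7,12,8,2,14,1,5,3,9,0] ![14,10,8,12,1,11,4,5,7,13,0,3,6,2,9] (by decide) (by decide)], ?_, ?_, ?_⟩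
  · intro i hi x
    fin_cases i <;>
      first
        | exact per5 _ (by decide) (by decide) x
        | exact absurd hi (by decide)
  · intro i hi x
    fin_cases i <;>
      first
        | exact per15 _ (by decide) (by decide) (by decide) x
        | exact absurd hi (by decide)
  · exact uniq_of _ (by decide)

lemma case4 : HWPStarSolution 15 5 15 4 10 := by
  refine ⟨![mkPerm ![2,13,4,6,1,3,11,9,14,8,7,12,5,0,10] ![13,4,0,5,2,12,3,10,9,7,14,6,11,1,8] (by decide) (by decide),
    mkPerm ![9,0,10,5,2,6,7,13,11,12,8,4,14,3,1] ![1,14,4,13,11,3,5,6,10,0,2,8,9,7,12] (by decide) (by decide),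
    mkPerm ![11,8,1,13,5,10,3,4,0,6,12,2,7,14,9] ![8,2,11,6,7,4,9,12,1,14,5,0,10,3,13] (by decide) (by decide),
    mkPerm ![3,7,6,1,13,8,12,14,4,10,2,5,9,11,0] ![14,3,10,0,8,11,2,1,5,12,9,13,6,4,7] (by decide) (by decide),
    mkPerm ![14,5,0,2,8,9,13,11,7,4,1,3,6,10,12] ![2,10,3,11,9,1,12,8,4,5,13,7,14,6,0] (by decide) (by decide),
    mkPerm ![10,12,5,11,9,4,1,0,3,13,14,6,2,7,8] ![7,6,12,8,5,2,11,13,14,4,0,3,1,9,10] (by decide) (by decide),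
    mkPerm ![4,9,3,8,11,0,2,10,12,14,6,1,13,5,7] ![5,11,6,2,0,13,10,14,3,1,7,4,8,12,9] (by decide) (by decide),
    mkPerm ![6,2,12,4,10,7,14,8,1,5,11,0,3,9,13] ![11,8,1,12,3,9,0,5,7,13,4,10,2,14,6] (by decide) (by decide),
    mkPerm ![5,4,8,12,6,14,9,2,10,7,0,13,11,1,3] ![10,13,7,14,1,0,4,9,2,6,8,12,3,11,5] (by decide) (by decide),
    mkPerm ![1,6,9,0,14,12,4,5,2,3,13,7,10,8,11] ![3,0,8,9,6,7,1,11,13,2,12,14,5,10,4] (by decide) (by decide),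
    mkPerm ![13,10,7,14,3,11,5,12,9,1,4,8,0,6,2] ![12,9,14,4,10,6,13,2,11,8,1,5,7,0,3] (by decide) (by decide),
    mkPerm ![12,14,11,10,7,1,8,3,13,0,5,9,4,2,6] ![9,5,13,7,12,10,14,4,6,11,3,2,0,8,1] (by decide) (by decide),
    mkPerm ![8,3,13,7,0,2,10,6,5,11,9,14,1,12,4] ![4,12,5,1,14,8,7,3,0,10,6,9,13,2,11] (by decide) (by decide),
    mkPerm ![7,11,14,9,12,13,0,1,6,2,3,10,8,4,5] ![6,7,9,10,13,14,8,0,12,3,11,1,4,5,2] (by decide) (by decide)], ?_, ?_, ?_⟩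
  · intro i hi x
    fin_cases i <;>
      first
        | exact per5 _ (by decide) (by decide) x
        | exact absurd hi (by decide)
  · intro i hi x
    fin_cases i <;>
      first
        | exact per15 _ (by decide) (by decide) (by decide) x
        | exact absurd hi (by decide)
  · exact uniq_of _ (by decide)

lemma case5 : HWPStarSolution 15 5 15 5 9 := by
  refine ⟨![mkPerm ![2,13,4,6,1,3,11,9,14,8,7,12,5,0,10] ![13,4,0,5,2,12,3,10,9,7,14,6,11,1,8] (by decide) (by decide),
    mkPerm ![9,0,10,5,2,6,7,13,11,12,8,4,14,3,1] ![1,14,4,13,11,3,5,6,10,0,2,8,9,7,12] (by decide) (by decide),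
    mkPerm ![11,8,1,13,5,10,3,4,0,6,12,2,7,14,9] ![8,2,11,6,7,4,9,12,1,14,5,0,10,3,13] (by decide) (by decide),
    mkPerm ![3,7,6,1,13,8,12,14,4,10,2,5,9,11,0] ![14,3,10,0,8,11,2,1,5,12,9,13,6,4,7] (by decide) (by decide),
    mkPerm ![14,11,13,2,3,4,10,8,9,1,0,7,6,5,12] ![10,9,3,4,5,13,12,11,7,8,6,1,14,2,0] (by decide) (by decide),
    mkPerm ![5,4,9,0,6,14,13,1,2,7,3,8,10,12,11] ![3,7,8,10,1,0,4,9,11,2,12,14,13,6,5] (by decide) (by decide),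
    mkPerm ![7,9,0,4,8,2,1,12,6,14,5,3,11,10,13] ![2,6,5,11,3,10,8,0,4,1,13,12,7,14,9] (by decide) (by decide),
    mkPerm ![13,10,3,7,9,12,5,0,1,11,14,6,2,8,4] ![7,8,12,2,14,6,11,3,13,4,1,9,5,0,10] (by decide) (by decide),
    mkPerm ![4,2,12,10,14,1,9,6,13,5,11,0,3,7,8] ![11,5,1,12,0,9,7,13,14,6,3,10,2,8,4] (by decide) (by decide),
    mkPerm ![1,14,7,8,11,9,0,3,12,13,6,10,4,2,5] ![6,0,13,7,12,14,10,2,3,5,11,4,8,9,1] (by decide) (by decide),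
    mkPerm ![10,5,14,12,0,11,4,2,7,3,13,9,8,1,6] ![4,13,7,9,6,1,14,8,12,11,0,5,3,10,2] (by decide) (by decide),
    mkPerm ![6,12,8,11,7,0,14,5,10,2,4,1,13,9,3] ![5,11,9,14,10,7,0,4,2,13,8,3,1,12,6] (by decide) (by decide),
    mkPerm ![8,3,11,9,12,13,2,10,5,4,1,14,0,6,7] ![12,10,6,1,9,8,13,14,0,3,7,2,4,5,11] (by decide) (by decide),
    mkPerm ![12,6,5,14,10,7,8,11,3,0,9,13,1,4,2] ![9,12,14,8,13,2,1,5,6,10,4,7,0,11,3] (by decide) (by decide)], ?_, ?_, ?_⟩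
  · intro i hi x
    fin_cases i <;>
      first
        | exact per5 _ (by decide) (by decide) x
        | exact absurd hi (by decide)
  · intro i hi x
    fin_cases i <;>
      first
        | exact per15 _ (by decide) (by decide) (by decide) x
        | exact absurd hi (by decide)
  · exact uniq_of _ (by decide)

lemma case6 : HWPStarSolution 15 5 15 6 8 := by
  refine ⟨![mkPerm ![2,13,4,6,1,3,11,9,14,8,7,12,5,0,10] ![13,4,0,5,2,12,3,10,9,7,14,6,11,1,8] (by decide) (by decide),
    mkPerm ![9,0,10,5,2,6,7,13,11,12,8,4,14,3,1] ![1,14,4,13,11,3,5,6,10,0,2,8,9,7,12] (by decide) (by decide),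
    mkPerm ![11,8,1,13,5,10,3,4,0,6,12,2,7,14,9] ![8,2,11,6,7,4,9,12,1,14,5,0,10,3,13] (by decide) (by decide),
    mkPerm ![3,7,6,1,13,8,12,14,4,10,2,5,9,11,0] ![14,3,10,0,8,11,2,1,5,12,9,13,6,4,7] (by decide) (by decide),
    mkPerm ![14,11,13,2,3,4,10,8,9,1,0,7,6,5,12] ![10,9,3,4,5,13,12,11,7,8,6,1,14,2,0] (by decide) (by decide),
    mkPerm ![5,9,8,0,12,14,13,6,10,7,4,3,2,1,11] ![3,13,12,11,10,0,7,9,2,1,8,14,4,6,5] (by decide) (by decide),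
    mkPerm ![1,5,7,9,0,11,2,3,12,14,13,6,10,4,8] ![4,0,6,7,13,1,11,2,14,3,12,5,8,10,9] (by decide) (by decide),
    mkPerm ![13,12,14,8,11,7,9,2,6,5,1,0,3,10,4] ![11,10,7,12,14,9,8,5,3,6,13,4,1,0,2] (by decide) (by decide),
    mkPerm ![6,2,9,4,10,12,5,0,7,3,14,1,11,8,13] ![7,11,1,9,3,6,0,8,13,2,4,12,5,14,10] (by decide) (by decide),
    mkPerm ![7,10,0,12,8,13,1,5,2,11,9,14,4,6,3] ![2,6,8,14,12,7,13,0,4,10,1,9,3,5,11] (by decide) (by decide),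
    mkPerm ![4,3,12,14,9,1,0,10,5,2,11,8,13,7,6] ![6,5,9,1,0,8,14,13,11,4,7,10,2,12,3] (by decide) (by decide),
    mkPerm ![12,14,3,10,7,2,4,11,1,0,6,13,8,9,5] ![9,8,5,2,6,14,10,4,12,13,3,7,0,11,1] (by decide) (by decide),
    mkPerm ![8,4,11,7,6,9,14,1,3,13,5,10,0,12,2] ![12,7,14,8,1,10,4,3,0,5,11,2,13,9,6] (by decide) (by decide),
    mkPerm ![10,6,5,11,14,0,8,12,13,4,3,9,1,2,7] ![5,12,13,10,9,2,1,14,6,11,0,3,7,8,4] (by decide) (by decide)], ?_, ?_, ?_⟩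
  · intro i hi x
    fin_cases i <;>
      first
        | exact per5 _ (by decide) (by decide) x
        | exact absurd hi (by decide)
  · intro i hi x
    fin_cases i <;>
      first
        | exact per15 _ (by decide) (by decide) (by decide) x
        | exact absurd hi (by decide)
  · exact uniq_of _ (by decide)

lemma case7 : HWPStarSolution 15 5 15 7 7 := by
  refine ⟨![mkPerm ![2,13,4,6,1,3,11,9,14,8,7,12,5,0,10] ![13,4,0,5,2,12,3,10,9,7,14,6,11,1,8] (by decide) (by decide),
    mkPerm ![9,0,10,5,2,6,7,13,11,12,8,4,14,3,1] ![1,14,4,13,11,3,5,6,10,0,2,8,9,7,12] (by decide) (by decide),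
    mkPerm ![11,8,1,13,5,10,3,4,0,6,12,2,7,14,9] ![8,2,11,6,7,4,9,12,1,14,5,0,10,3,13] (by decide) (by decide),
    mkPerm ![3,7,6,1,13,8,12,14,4,10,2,5,9,11,0] ![14,3,10,0,8,11,2,1,5,12,9,13,6,4,7] (by decide) (by decide),
    mkPerm ![14,11,13,2,3,4,10,8,9,1,0,7,6,5,12] ![10,9,3,4,5,13,12,11,7,8,6,1,14,2,0] (by decide) (by decide),
    mkPerm ![5,9,8,0,12,14,13,6,10,7,4,3,2,1,11] ![3,13,12,11,10,0,7,9,2,1,8,14,4,6,5] (by decide) (by decide),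
    mkPerm ![1,5,9,14,8,11,0,2,7,4,3,6,10,12,13] ![6,0,7,10,9,1,11,8,4,2,12,5,13,14,3] (by decide) (by decide),
    mkPerm ![10,3,12,4,9,2,14,11,5,0,6,13,1,8,7] ![9,12,5,1,3,8,10,14,13,4,0,7,2,11,6] (by decide) (by decide),
    mkPerm ![13,6,11,9,7,12,8,1,3,14,5,10,0,4,2] ![12,7,14,8,13,10,1,4,6,3,11,2,5,0,9] (by decide) (by decide),
    mkPerm ![7,4,0,12,10,9,2,5,1,11,14,8,13,6,3] ![2,8,6,14,1,7,13,0,11,5,4,9,3,12,10] (by decide) (by decide),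
    mkPerm ![4,12,7,11,6,13,9,0,2,3,1,14,8,10,5] ![7,10,8,9,0,14,4,2,12,6,13,3,1,5,11] (by decide) (by decide),
    mkPerm ![12,14,5,7,11,1,4,10,6,13,9,0,3,2,8] ![11,5,13,12,6,2,8,3,14,10,7,4,0,9,1] (by decide) (by decide),
    mkPerm ![6,10,14,8,0,7,5,3,12,2,13,1,11,9,4] ![4,11,9,7,14,6,0,5,3,13,1,12,8,10,2] (by decide) (by decide),
    mkPerm ![8,2,3,10,14,0,1,12,13,5,11,9,4,7,6] ![5,6,1,2,12,9,14,13,0,11,3,10,7,8,4] (by decide) (by decide)], ?_, ?_, ?_⟩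
  · intro i hi x
    fin_cases i <;>
      first
        | exact per5 _ (by decide) (by decide) x
        | exact absurd hi (by decide)
  · intro i hi x
    fin_cases i <;>
      first
        | exact per15 _ (by decide) (by decide) (by decide) x
        | exact absurd hi (by decide)
  · exact uniq_of _ (by decide)

lemma case8 : HWPStarSolution 15 5 15 8 6 := by
  refine ⟨![mkPerm ![2,13,4,6,1,3,11,9,14,8,7,12,5,0,10] ![13,4,0,5,2,12,3,10,9,7,14,6,11,1,8] (by decide) (by decide),
    mkPerm ![9,0,10,5,2,6,7,13,11,12,8,4,14,3,1] ![1,14,4,13,11,3,5,6,10,0,2,8,9,7,12] (by decide) (by decide),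
    mkPerm ![11,8,1,13,5,10,3,4,0,6,12,2,7,14,9] ![8,2,11,6,7,4,9,12,1,14,5,0,10,3,13] (by decide) (by decide),
    mkPerm ![3,7,6,1,13,8,12,14,4,10,2,5,9,11,0] ![14,3,10,0,8,11,2,1,5,12,9,13,6,4,7] (by decide) (by decide),
    mkPerm ![14,11,13,2,3,4,10,8,9,1,0,7,6,5,12] ![10,9,3,4,5,13,12,11,7,8,6,1,14,2,0] (by decide) (by decide),
    mkPerm ![5,9,8,0,12,14,13,6,10,7,4,3,2,1,11] ![3,13,12,11,10,0,7,9,2,1,8,14,4,6,5] (by decide) (by decide),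
    mkPerm ![1,5,9,14,8,11,0,2,7,4,3,6,10,12,13] ![6,0,7,10,9,1,11,8,4,2,12,5,13,14,3] (by decide) (by decide),
    mkPerm ![10,12,3,4,9,1,14,0,5,13,6,8,11,2,7] ![7,5,13,2,3,8,10,14,11,4,0,12,1,9,6] (by decide) (by decide),
    mkPerm ![13,10,7,11,6,9,8,3,12,2,14,0,1,4,5] ![11,12,9,7,13,14,4,2,6,5,1,3,8,0,10] (by decide) (by decide),
    mkPerm ![6,3,0,12,11,2,9,10,1,14,5,13,4,7,8] ![2,8,5,1,12,10,0,13,14,6,7,4,3,11,9] (by decide) (by decide),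
    mkPerm ![12,2,11,7,14,0,4,1,6,5,9,10,13,8,3] ![5,7,1,14,6,9,8,3,13,10,11,2,0,12,4] (by decide) (by decide),
    mkPerm ![7,4,14,8,10,12,5,11,2,3,13,1,0,9,6] ![12,11,8,9,1,6,14,0,3,13,4,7,5,10,2] (by decide) (by decide),
    mkPerm ![4,14,12,10,7,13,1,5,3,0,11,9,8,6,2] ![9,6,14,8,0,7,13,4,12,11,3,10,2,5,1] (by decide) (by decide),
    mkPerm ![8,6,5,9,0,7,2,12,13,11,1,14,3,10,4] ![4,10,6,12,14,2,1,5,0,3,13,9,7,8,11] (by decide) (by decide)], ?_, ?_, ?_⟩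
  · intro i hi x
    fin_cases i <;>
      first
        | exact per5 _ (by decide) (by decide) x
        | exact absurd hi (by decide)
  · intro i hi x
    fin_cases i <;>
      first
        | exact per15 _ (by decide) (by decide) (by decide) x
        | exact absurd hi (by decide)
  · exact uniq_of _ (by decide)

lemma case9 : HWPStarSolution 15 5 15 9 5 := by
  refine ⟨![mkPerm ![2,13,4,6,1,3,11,9,14,8,7,12,5,0,10] ![13,4,0,5,2,12,3,10,9,7,14,6,11,1,8] (by decide) (by decide),
    mkPerm ![9,0,10,5,2,6,7,13,11,12,8,4,14,3,1] ![1,14,4,13,11,3,5,6,10,0,2,8,9,7,12] (by decide) (by decide),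
    mkPerm ![11,8,1,13,5,10,3,4,0,6,12,2,7,14,9] ![8,2,11,6,7,4,9,12,1,14,5,0,10,3,13] (by decide) (by decide),
    mkPerm ![3,7,6,1,13,8,12,14,4,10,2,5,9,11,0] ![14,3,10,0,8,11,2,1,5,12,9,13,6,4,7] (by decide) (by decide),
    mkPerm ![14,11,13,2,3,4,10,8,9,1,0,7,6,5,12] ![10,9,3,4,5,13,12,11,7,8,6,1,14,2,0] (by decide) (by decide),
    mkPerm ![5,9,8,0,12,14,13,6,10,7,4,3,2,1,11] ![3,13,12,11,10,0,7,9,2,1,8,14,4,6,5] (by decide) (by decide),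
    mkPerm ![1,5,9,14,8,11,0,2,7,4,3,6,10,12,13] ![6,0,7,10,9,1,11,8,4,2,12,5,13,14,3] (by decide) (by decide),
    mkPerm ![10,12,3,4,9,1,14,0,5,13,6,8,11,2,7] ![7,5,13,2,3,8,10,14,11,4,0,12,1,9,6] (by decide) (by decide),
    mkPerm ![13,10,0,9,6,7,2,12,3,11,5,14,1,4,8] ![2,12,6,8,13,10,4,5,14,3,1,9,7,0,11] (by decide) (by decide),
    mkPerm ![7,6,5,12,11,9,8,3,2,14,1,0,13,10,4] ![11,10,8,7,14,2,1,0,6,5,13,4,3,12,9] (by decide) (by decide),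
    mkPerm ![12,4,14,11,10,0,9,5,6,2,13,1,8,7,3] ![5,11,9,14,1,7,8,13,12,6,4,3,0,10,2] (by decide) (by decide),
    mkPerm ![6,14,12,8,7,2,4,10,1,3,11,13,0,9,5] ![12,8,5,9,6,14,0,4,3,13,7,10,2,11,1] (by decide) (by decide),
    mkPerm ![4,2,11,7,14,13,5,1,12,0,9,10,3,8,6] ![9,7,1,12,0,6,14,3,13,10,11,2,8,5,4] (by decide) (by decide),
    mkPerm ![8,3,7,10,0,12,1,11,13,5,14,9,4,6,2] ![4,6,14,1,12,9,13,2,0,11,3,7,5,8,10] (by decide) (by decide)], ?_, ?_, ?_⟩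
  · intro i hi x
    fin_cases i <;>
      first
        | exact per5 _ (by decide) (by decide) x
        | exact absurd hi (by decide)
  · intro i hi x
    fin_cases i <;>
      first
        | exact per15 _ (by decide) (by decide) (by decide) x
        | exact absurd hi (by decide)
  · exact uniq_of _ (by decide)

lemma case10 : HWPStarSolution 15 5 15 10 4 := by
  refine ⟨![mkPerm ![2,13,4,6,1,3,11,9,14,8,7,12,5,0,10] ![13,4,0,5,2,12,3,10,9,7,14,6,11,1,8] (by decide) (by decide),
    mkPerm ![9,0,10,5,2,6,7,13,11,12,8,4,14,3,1] ![1,14,4,13,11,3,5,6,10,0,2,8,9,7,12] (by decide) (by decide),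
    mkPerm ![11,8,1,13,5,10,3,4,0,6,12,2,7,14,9] ![8,2,11,6,7,4,9,12,1,14,5,0,10,3,13] (by decide) (by decide),
    mkPerm ![3,7,6,1,13,8,12,14,4,10,2,5,9,11,0] ![14,3,10,0,8,11,2,1,5,12,9,13,6,4,7] (by decide) (by decide),
    mkPerm ![14,11,13,2,3,4,10,8,9,1,0,7,6,5,12] ![10,9,3,4,5,13,12,11,7,8,6,1,14,2,0] (by decide) (by decide),
    mkPerm ![5,9,8,0,12,14,13,6,10,7,4,3,2,1,11] ![3,13,12,11,10,0,7,9,2,1,8,14,4,6,5] (by decide) (by decide),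
    mkPerm ![1,5,9,14,8,11,0,2,7,4,3,6,10,12,13] ![6,0,7,10,9,1,11,8,4,2,12,5,13,14,3] (by decide) (by decide),
    mkPerm ![10,12,3,4,9,1,14,0,5,13,6,8,11,2,7] ![7,5,13,2,3,8,10,14,11,4,0,12,1,9,6] (by decide) (by decide),
    mkPerm ![13,10,0,9,6,7,2,12,3,11,5,14,1,4,8] ![2,12,6,8,13,10,4,5,14,3,1,9,7,0,11] (by decide) (by decide),
    mkPerm ![7,14,11,12,0,13,9,3,6,5,1,10,4,8,2] ![4,10,14,7,12,9,8,0,13,6,11,2,3,5,1] (by decide) (by decide),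
    mkPerm ![6,2,12,8,7,0,1,5,13,14,11,9,3,10,4] ![5,6,1,12,14,7,0,4,3,11,13,10,2,8,9] (by decide) (by decide),
    mkPerm ![4,3,5,11,14,12,8,10,1,2,9,13,0,7,6] ![12,8,9,1,0,2,14,13,6,10,7,3,5,11,4] (by decide) (by decide),
    mkPerm ![12,4,14,7,10,9,5,11,2,0,13,1,8,6,3] ![9,11,8,14,1,6,13,3,12,5,4,7,0,10,2] (by decide) (by decide),
    mkPerm ![8,6,7,10,11,2,4,1,12,3,14,0,13,9,5] ![11,7,5,9,6,14,1,2,0,13,3,4,8,12,10] (by decide) (by decide)], ?_, ?_, ?_⟩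
  · intro i hi x
    fin_cases i <;>
      first
        | exact per5 _ (by decide) (by decide) x
        | exact absurd hi (by decide)
  · intro i hi x
    fin_cases i <;>
      first
        | exact per15 _ (by decide) (by decide) (by decide) x
        | exact absurd hi (by decide)
  · exact uniq_of _ (by decide)

lemma case11 : HWPStarSolution 15 5 15 11 3 := by
  refine ⟨![mkPerm ![2,13,4,6,1,3,11,9,14,8,7,12,5,0,10] ![13,4,0,5,2,12,3,10,9,7,14,6,11,1,8] (by decide) (by decide),
    mkPerm ![9,0,10,5,2,6,7,13,11,12,8,4,14,3,1] ![1,14,4,13,11,3,5,6,10,0,2,8,9,7,12] (by decide) (by decide),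
    mkPerm ![11,8,1,13,5,10,3,4,0,6,12,2,7,14,9] ![8,2,11,6,7,4,9,12,1,14,5,0,10,3,13] (by decide) (by decide),
    mkPerm ![3,7,6,1,13,8,12,14,4,10,2,5,9,11,0] ![14,3,10,0,8,11,2,1,5,12,9,13,6,4,7] (by decide) (by decide),
    mkPerm ![14,11,13,2,3,4,10,8,9,1,0,7,6,5,12] ![10,9,3,4,5,13,12,11,7,8,6,1,14,2,0] (by decide) (by decide),
    mkPerm ![5,9,8,0,12,14,13,6,10,7,4,3,2,1,11] ![3,13,12,11,10,0,7,9,2,1,8,14,4,6,5] (by decide) (by decide),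
    mkPerm ![1,5,9,14,8,11,0,2,7,4,3,6,10,12,13] ![6,0,7,10,9,1,11,8,4,2,12,5,13,14,3] (by decide) (by decide),
    mkPerm ![10,12,3,4,9,1,14,0,5,13,6,8,11,2,7] ![7,5,13,2,3,8,10,14,11,4,0,12,1,9,6] (by decide) (by decide),
    mkPerm ![13,10,0,9,6,7,2,12,3,11,5,14,1,4,8] ![2,12,6,8,13,10,4,5,14,3,1,9,7,0,11] (by decide) (by decide),
    mkPerm ![7,14,11,12,0,13,9,3,6,5,1,10,4,8,2] ![4,10,14,7,12,9,8,0,13,6,11,2,3,5,1] (by decide) (by decide),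
    mkPerm ![6,3,14,11,10,12,1,5,13,2,9,0,8,7,4] ![11,6,9,1,14,7,0,13,12,10,4,3,5,8,2] (by decide) (by decide),
    mkPerm ![8,2,5,7,11,0,4,1,12,3,14,9,13,10,6] ![5,7,1,9,6,2,14,3,0,11,13,4,8,12,10] (by decide) (by decide),
    mkPerm ![4,6,12,8,7,2,5,10,1,14,11,13,0,9,3] ![12,8,5,14,0,6,1,4,3,13,7,10,2,11,9] (by decide) (by decide),
    mkPerm ![12,4,7,10,14,9,8,11,2,0,13,1,3,6,5] ![9,11,8,12,1,14,13,2,6,5,3,7,0,10,4] (by decide) (by decide)], ?_, ?_, ?_⟩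
  · intro i hi x
    fin_cases i <;>
      first
        | exact per5 _ (by decide) (by decide) x
        | exact absurd hi (by decide)
  · intro i hi x
    fin_cases i <;>
      first
        | exact per15 _ (by decide) (by decide) (by decide) x
        | exact absurd hi (by decide)
  · exact uniq_of _ (by decide)

lemma case12 : HWPStarSolution 15 5 15 12 2 := by
  refine ⟨![mkPerm ![2,13,4,6,1,3,11,9,14,8,7,12,5,0,10] ![13,4,0,5,2,12,3,10,9,7,14,6,11,1,8] (by decide) (by decide),
    mkPerm ![9,0,10,5,2,6,7,13,11,12,8,4,14,3,1] ![1,14,4,13,11,3,5,6,10,0,2,8,9,7,12] (by decide) (by decide),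
    mkPerm ![11,8,1,13,5,10,3,4,0,6,12,2,7,14,9] ![8,2,11,6,7,4,9,12,1,14,5,0,10,3,13] (by decide) (by decide),
    mkPerm ![3,7,6,1,13,8,12,14,4,10,2,5,9,11,0] ![14,3,10,0,8,11,2,1,5,12,9,13,6,4,7] (by decide) (by decide),
    mkPerm ![14,11,13,2,3,4,10,8,9,1,0,7,6,5,12] ![10,9,3,4,5,13,12,11,7,8,6,1,14,2,0] (by decide) (by decide),
    mkPerm ![5,9,8,0,12,14,13,6,10,7,4,3,2,1,11] ![3,13,12,11,10,0,7,9,2,1,8,14,4,6,5] (by decide) (by decide),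
    mkPerm ![1,5,9,14,8,11,0,2,7,4,3,6,10,12,13] ![6,0,7,10,9,1,11,8,4,2,12,5,13,14,3] (by decide) (by decide),
    mkPerm ![10,12,3,4,9,1,14,0,5,13,6,8,11,2,7] ![7,5,13,2,3,8,10,14,11,4,0,12,1,9,6] (by decide) (by decide),
    mkPerm ![13,10,0,9,6,7,2,12,3,11,5,14,1,4,8] ![2,12,6,8,13,10,4,5,14,3,1,9,7,0,11] (by decide) (by decide),
    mkPerm ![7,14,11,12,0,13,9,3,6,5,1,10,4,8,2] ![4,10,14,7,12,9,8,0,13,6,11,2,3,5,1] (by decide) (by decide),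
    mkPerm ![6,3,7,11,10,12,1,5,2,14,13,0,8,9,4] ![11,6,8,1,14,7,0,2,12,13,4,3,5,10,9] (by decide) (by decide),
    mkPerm ![8,2,12,10,7,9,4,11,1,3,14,13,0,6,5] ![12,8,1,9,6,14,13,4,0,5,3,7,2,11,10] (by decide) (by decide),
    mkPerm ![4,6,14,8,11,2,5,10,12,0,9,1,13,7,3] ![9,11,5,14,0,6,1,13,3,10,7,4,8,12,2] (by decide) (by decide),
    mkPerm ![12,4,5,7,14,0,8,1,13,2,11,9,3,10,6] ![5,7,9,12,1,2,14,3,6,11,13,10,0,8,4] (by decide) (by decide)], ?_, ?_, ?_⟩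
  · intro i hi x
    fin_cases i <;>
      first
        | exact per5 _ (by decide) (by decide) x
        | exact absurd hi (by decide)
  · intro i hi x
    fin_cases i <;>
      first
        | exact per15 _ (by decide) (by decide) (by decide) x
        | exact absurd hi (by decide)
  · exact uniq_of _ (by decide)

lemma case13 : HWPStarSolution 15 5 15 13 1 := by
  refine ⟨![mkPerm ![2,13,4,6,1,3,11,9,14,8,7,12,5,0,10] ![13,4,0,5,2,12,3,10,9,7,14,6,11,1,8] (by decide) (by decide),
    mkPerm ![9,0,10,5,2,6,7,13,11,12,8,4,14,3,1] ![1,14,4,13,11,3,5,6,10,0,2,8,9,7,12] (by decide) (by decide),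
    mkPerm ![11,8,1,13,5,10,3,4,0,6,12,2,7,14,9] ![8,2,11,6,7,4,9,12,1,14,5,0,10,3,13] (by decide) (by decide),
    mkPerm ![3,7,6,1,13,8,12,14,4,10,2,5,9,11,0] ![14,3,10,0,8,11,2,1,5,12,9,13,6,4,7] (by decide) (by decide),
    mkPerm ![14,11,13,2,3,4,10,8,9,1,0,7,6,5,12] ![10,9,3,4,5,13,12,11,7,8,6,1,14,2,0] (by decide) (by decide),
    mkPerm ![5,9,8,0,12,14,13,6,10,7,4,3,2,1,11] ![3,13,12,11,10,0,7,9,2,1,8,14,4,6,5] (by decide) (by decide),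
    mkPerm ![1,5,9,12,8,11,0,2,7,4,14,6,13,10,3] ![6,0,7,14,9,1,11,8,4,2,13,5,3,12,10] (by decide) (by decide),
    mkPerm ![8,6,0,9,11,7,5,10,3,2,1,14,4,12,13] ![2,10,9,8,12,6,1,5,0,3,7,4,13,14,11] (by decide) (by decide),
    mkPerm ![4,12,11,7,14,0,2,1,5,13,3,9,10,6,8] ![5,7,6,10,0,8,13,3,14,11,12,2,1,9,4] (by decide) (by decide),
    mkPerm ![13,2,12,14,10,9,1,5,6,3,11,0,8,4,7] ![11,6,1,9,13,7,8,14,12,5,4,10,2,0,3] (by decide) (by decide),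
    mkPerm ![10,4,14,11,7,2,9,3,12,5,13,1,0,8,6] ![12,11,5,7,1,9,14,4,13,6,0,3,8,10,2] (by decide) (by decide),
    mkPerm ![12,10,3,4,6,1,8,0,2,14,9,13,11,7,5] ![7,5,8,2,3,14,4,13,6,10,1,12,0,11,9] (by decide) (by decide),
    mkPerm ![6,3,7,10,9,12,14,11,13,0,5,8,1,2,4] ![9,12,13,1,14,10,0,2,11,4,3,7,5,8,6] (by decide) (by decide),
    mkPerm ![7,14,5,8,0,13,4,12,1,11,6,10,3,9,2] ![4,8,14,12,6,2,10,0,3,13,11,9,7,5,1] (by decide) (by decide)], ?_, ?_, ?_⟩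
  · intro i hi x
    fin_cases i <;>
      first
        | exact per5 _ (by decide) (by decide) x
        | exact absurd hi (by decide)
  · intro i hi x
    fin_cases i <;>
      first
        | exact per15 _ (by decide) (by decide) (by decide) x
        | exact absurd hi (by decide)
  · exact uniq_of _ (by decide)

lemma case14 : HWPStarSolution 15 5 15 14 0 := by
  refine ⟨![mkPerm ![2,13,4,6,1,3,11,9,14,8,7,12,5,0,10] ![13,4,0,5,2,12,3,10,9,7,14,6,11,1,8] (by decide) (by decide),
    mkPerm ![9,0,10,5,2,6,7,13,11,12,8,4,14,3,1] ![1,14,4,13,11,3,5,6,10,0,2,8,9,7,12] (by decide) (by decide),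
    mkPerm ![11,8,1,13,5,10,3,4,0,6,12,2,7,14,9] ![8,2,11,6,7,4,9,12,1,14,5,0,10,3,13] (by decide) (by decide),
    mkPerm ![3,7,6,1,13,8,12,14,4,10,2,5,9,11,0] ![14,3,10,0,8,11,2,1,5,12,9,13,6,4,7] (by decide) (by decide),
    mkPerm ![14,11,3,4,9,1,10,8,5,13,0,7,6,2,12] ![10,5,13,2,3,8,12,11,7,4,6,1,14,9,0] (by decide) (by decide),
    mkPerm ![12,10,13,7,14,0,8,1,9,4,11,3,2,5,6] ![5,7,12,11,9,13,14,3,6,8,1,10,0,2,4] (by decide) (by decide),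
    mkPerm ![5,3,8,12,7,14,4,2,6,0,1,9,13,10,11] ![9,10,7,1,6,0,8,4,2,11,13,14,3,12,5] (by decide) (by decide),
    mkPerm ![1,2,14,0,8,11,9,12,13,5,6,10,4,7,3] ![3,0,1,14,12,9,10,13,4,6,11,5,7,8,2] (by decide) (by decide),
    mkPerm ![10,14,7,9,12,4,2,11,3,1,5,13,0,6,8] ![12,9,6,8,5,10,13,2,14,3,0,7,4,11,1] (by decide) (by decide),
    mkPerm ![4,6,11,14,10,2,5,0,12,7,9,1,3,8,13] ![7,11,5,12,0,6,1,9,13,10,4,2,8,14,3] (by decide) (by decide),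
    mkPerm ![7,5,9,11,0,12,14,6,2,3,13,8,10,1,4] ![4,13,8,9,14,1,7,0,11,2,12,3,5,10,6] (by decide) (by decide),
    mkPerm ![8,4,0,2,6,9,13,5,10,11,3,14,1,12,7] ![2,12,3,10,1,7,4,14,0,5,8,9,13,6,11] (by decide) (by decide),
    mkPerm ![6,12,5,8,3,13,1,10,7,14,4,0,11,9,2] ![11,6,14,4,10,2,0,8,3,13,7,12,1,5,9] (by decide) (by decide),
    mkPerm ![13,9,12,10,11,7,0,3,1,2,14,6,8,4,5] ![6,8,9,7,13,14,11,5,12,1,3,4,2,0,10] (by decide) (by decide)], ?_, ?_, ?_⟩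
  · intro i hi x
    fin_cases i <;>
      first
        | exact per5 _ (by decide) (by decide) x
        | exact absurd hi (by decide)
  · intro i hi x
    fin_cases i <;>
      first
        | exact per15 _ (by decide) (by decide) (by decide) x
        | exact absurd hi (by decide)
  · exact uniq_of _ (by decide)


/-- HWP*(15; 5^r, 15^s) has a solution if and only if r + s = 14. -/
theorem hwpStar_15_5_15 (r s : ℕ) :
    HWPStarSolution 15 5 15 r s ↔ r + s = 14 := by
  constructor
  · rintro ⟨σ, h1, h2, h3⟩
    have hfpf : ∀ (i : Fin (r + s)) (x : Fin 15), σ i x ≠ x := by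
      intro i x h
      have hone : Function.minimalPeriod ⇑(σ i) x = 1 :=
        Function.minimalPeriod_eq_one_iff_isFixedPt.mpr h
      rcases lt_or_ge (i : ℕ) r with hi | hi
      · have := h1 i hi x; omega
      · have := h2 i hi x; omega
    let f : Fin (r + s) × Fin 15 → {p : Fin 15 × Fin 15 // p.1 ≠ p.2} :=
      fun q => ⟨(q.2, σ q.1 q.2), fun e => hfpf q.1 q.2 e.symm⟩
    have hbij : Function.Bijective f := by
      constructor
      · rintro ⟨i, x⟩ ⟨j, y⟩ hij
        have hx : x = y := congrArg (fun p => p.1.1) hij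
        subst hx
        have hv : σ i x = σ j x := congrArg (fun p => p.1.2) hij
        obtain ⟨k, hk, hu⟩ := h3 x (σ i x) (fun e => hfpf i x e.symm)
        have hik : i = k := hu i rfl
        have hjk : j = k := hu j hv.symm
        simp [hik, hjk]
      · rintro ⟨⟨x, y⟩, hxy⟩
        obtain ⟨i, hi, -⟩ := h3 x y hxy
        exact ⟨(i, x), by simp only [f, hi]⟩
    have hcard := Fintype.card_congr (Equiv.ofBijective f hbij)
    have hsub : Fintype.card {p : Fin 15 × Fin 15 // p.1 ≠ p.2} = 210 := by decide
    rw [Fintype.card_prod, Fintype.card_fin, Fintype.card_fin, hsub] at hcard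
    omega
  · intro h
    have h14 : r ≤ 14 := by omega
    interval_cases r
    · obtain rfl : s = 14 := by omega
      exact case0
    · obtain rfl : s = 13 := by omega
      exact case1
    · obtain rfl : s = 12 := by omega
      exact case2
    · obtain rfl : s = 11 := by omega
      exact case3
    · obtain rfl : s = 10 := by omega
      exact case4
    · obtain rfl : s = 9 := by omega
      exact case5
    · obtain rfl : s = 8 := by omega
      exact case6
    · obtain rfl : s = 7 := by omega
      exact case7
    · obtain rfl : s = 6 := by omega
      exact case8
    · obtain rfl : s = 5 := by omega
      exact case9
    · obtain rfl : s = 4 := by omega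
      exact case10
    · obtain rfl : s = 3 := by omega
      exact case11
    · obtain rfl : s = 2 := by omega
      exact case12
    · obtain rfl : s = 1 := by omega
      exact case13
    · obtain rfl : s = 0 := by omega
      exact case14
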